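/- Let A(t) be an n×l real matrix function of class C¹ on [a,b] with l ≤ n, and set B(t) = A(t)ᵀA(t). Suppose det B(t) ≠ 0 for t ∈ (a,b), det B(a) = 0, det B(b) ≠ 0, and there exists h_a > 0 with det B(a+t) = h_a² t² + o(t²) as t → 0+. Fix α > 0, γ > 0, κ > 0. Then there exists λ > 0, depending only on A, α, γ and κ, such that for every continuous ℝˡ-valued function r on [a,b] satisfying ‖r‖_{i,a,b} ≥ α‖r‖_{a,b} and |A(t)r(t)| ≤ κ(t−a)‖r‖_{a,b} for t ∈ [a, a+γ), one has ‖Ar‖_{i,a,b} ≥ λ‖r‖_{i,a,b}. -/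

import Mathlib

open Set Filter Asymptotics Topology MeasureTheory Matrix

/-- Euclidean norm of a vector in `ℝˡ`. -/
noncomputable def euclNorm {l : ℕ} (v : Fin l → ℝ) : ℝ := Real.sqrt (∑ i, v i ^ 2)

/-- `‖q‖_{a,b} = max_{t ∈ [a,b]} |q(t)|`. -/
noncomputable def supNorm {l : ℕ} (a b : ℝ) (q : ℝ → Fin l → ℝ) : ℝ :=
  sSup ((fun t => euclNorm (q t)) '' Set.Icc a b)

/-- `‖q‖_{i,a,b} = ∫_a^b |q(t)| dt`. -/
noncomputable def intNorm {l : ℕ} (a b : ℝ) (q : ℝ → Fin l → ℝ) : ℝ :=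
  ∫ t in a..b, euclNorm (q t)

lemma euclNorm_eq_norm {l : ℕ} (v : Fin l → ℝ) :
    euclNorm v = ‖(WithLp.toLp 2 v : EuclideanSpace ℝ (Fin l))‖ := by
  rw [EuclideanSpace.norm_eq]; simp [euclNorm, sq_abs]

lemma continuous_euclNorm {l : ℕ} : Continuous (euclNorm (l := l)) := by
  have : euclNorm (l := l) = fun v => ‖(WithLp.toLp 2 v : EuclideanSpace ℝ (Fin l))‖ := by
    funext v; exact euclNorm_eq_norm v
  rw [this]
  exact ((PiLp.continuousLinearEquiv 2 ℝ (fun _ : Fin l => ℝ)).symm.continuous).norm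

lemma euclNorm_nonneg {l : ℕ} (v : Fin l → ℝ) : 0 ≤ euclNorm v := Real.sqrt_nonneg _

lemma euclNorm_eq_zero {l : ℕ} (v : Fin l → ℝ) (h : euclNorm v = 0) : v = 0 := by
  rw [euclNorm_eq_norm] at h
  have h' := (norm_eq_zero (a := (WithLp.toLp 2 v : EuclideanSpace ℝ (Fin l)))).mp h
  simpa using congrArg WithLp.ofLp h'

lemma euclNorm_zero {l : ℕ} : euclNorm (0 : Fin l → ℝ) = 0 := by simp [euclNorm]

lemma euclNorm_smul {l : ℕ} (c : ℝ) (v : Fin l → ℝ) : euclNorm (c • v) = |c| * euclNorm v := by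
  rw [euclNorm_eq_norm, euclNorm_eq_norm]
  exact norm_smul c (WithLp.toLp 2 v : EuclideanSpace ℝ (Fin l))

lemma key_min {n l : ℕ} (hl : 0 < l) (c d : ℝ) (hcd : c ≤ d)
    (A : ℝ → Matrix (Fin n) (Fin l) ℝ)
    (hAc : ∀ i j, ContinuousOn (fun t => A t i j) (Set.Icc c d))
    (hinj : ∀ t ∈ Set.Icc c d, ∀ v : Fin l → ℝ, (A t).mulVec v = 0 → v = 0) :
    ∃ m > 0, ∀ t ∈ Set.Icc c d, ∀ v : Fin l → ℝ,
      m * euclNorm v ≤ euclNorm ((A t).mulVec v) := by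
  set e := PiLp.continuousLinearEquiv 2 ℝ (fun _ : Fin l => ℝ)
  have hSdef : {v : Fin l → ℝ | euclNorm v = 1}
      = (⇑e) '' (Metric.sphere (0 : EuclideanSpace ℝ (Fin l)) 1) := by
    ext v
    constructor
    · intro hv
      refine ⟨WithLp.toLp 2 v, ?_, rfl⟩
      rw [mem_sphere_zero_iff_norm, ← euclNorm_eq_norm]; exact hv
    · rintro ⟨w, hw, rfl⟩
      rw [mem_sphere_zero_iff_norm] at hw
      show euclNorm (e w) = 1
      rw [euclNorm_eq_norm]; exact hw
  have hS : IsCompact {v : Fin l → ℝ | euclNorm v = 1} := by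
    rw [hSdef]; exact (isCompact_sphere 0 1).image e.continuous
  set K := Set.Icc c d ×ˢ {v : Fin l → ℝ | euclNorm v = 1} with hK
  have hKc : IsCompact K := isCompact_Icc.prod hS
  have hu0 : euclNorm (fun i : Fin l => if i = ⟨0, hl⟩ then (1:ℝ) else 0) = 1 := by
    simp [euclNorm, Finset.sum_ite_eq', apply_ite]
  have hKne : K.Nonempty := ⟨⟨c, fun i => if i = ⟨0, hl⟩ then 1 else 0⟩,
    ⟨⟨le_refl c, hcd⟩, hu0⟩⟩
  set F : ℝ × (Fin l → ℝ) → ℝ := fun p => euclNorm ((A p.1).mulVec p.2) with hFdef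
  have hFc : ContinuousOn F K := by
    apply continuous_euclNorm.comp_continuousOn
    apply continuousOn_pi.2
    intro i
    simp only [Matrix.mulVec, dotProduct]
    apply continuousOn_finset_sum
    intro j _
    exact (((hAc i j).comp continuousOn_fst (fun p hp => hp.1)).mul
      ((continuous_apply j).comp continuous_snd).continuousOn)
  obtain ⟨p₀, hp₀, hmin⟩ := hKc.exists_isMinOn hKne hFc
  have hm0 : 0 < F p₀ := by
    rcases lt_or_eq_of_le (euclNorm_nonneg ((A p₀.1).mulVec p₀.2)) with h | h
    · exact h
    · exfalso
      have h0 : (A p₀.1).mulVec p₀.2 = 0 := euclNorm_eq_zero _ h.symm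
      have := hinj p₀.1 hp₀.1 p₀.2 h0
      have h1 : euclNorm p₀.2 = 1 := hp₀.2
      rw [this, euclNorm_zero] at h1
      norm_num at h1
  refine ⟨F p₀, hm0, ?_⟩
  intro t ht v
  by_cases hv : v = 0
  · subst hv
    simp [euclNorm_zero, Matrix.mulVec_zero, euclNorm_nonneg]
  · have hnv : 0 < euclNorm v := by
      rcases lt_or_eq_of_le (euclNorm_nonneg v) with h | h
      · exact h
      · exact absurd (euclNorm_eq_zero v h.symm) hv
    set u := (euclNorm v)⁻¹ • v with hu
    have hun : euclNorm u = 1 := by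
      rw [hu, euclNorm_smul, abs_of_pos (inv_pos.2 hnv), inv_mul_cancel₀ hnv.ne']
    have hmem : (t, u) ∈ K := ⟨ht, hun⟩
    have hle : F p₀ ≤ F (t, u) := hmin hmem
    have hFu : F (t, u) = (euclNorm v)⁻¹ * euclNorm ((A t).mulVec v) := by
      rw [hFdef]
      simp only
      rw [hu, Matrix.mulVec_smul, euclNorm_smul, abs_of_pos (inv_pos.2 hnv)]
    rw [hFu] at hle
    calc F p₀ * euclNorm v ≤ ((euclNorm v)⁻¹ * euclNorm ((A t).mulVec v)) * euclNorm v :=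
          mul_le_mul_of_nonneg_right hle (euclNorm_nonneg v)
      _ = euclNorm ((A t).mulVec v) := by field_simp

theorem stmt10 (n l : ℕ) (hln : l ≤ n) (a b : ℝ) (hab : a < b)
    (A : ℝ → Matrix (Fin n) (Fin l) ℝ)
    (hA : ∀ i j, ContDiffOn ℝ 1 (fun t => A t i j) (Set.Icc a b))
    (B : ℝ → Matrix (Fin l) (Fin l) ℝ) (hB : ∀ t, B t = (A t)ᵀ * A t)
    (hdet : ∀ t ∈ Set.Ioo a b, (B t).det ≠ 0)
    (hdeta : (B a).det = 0) (hdetb : (B b).det ≠ 0)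
    (ha : ℝ) (hha : 0 < ha)
    (hasyma : (fun t => (B (a + t)).det - ha ^ 2 * t ^ 2) =o[𝓝[>] (0 : ℝ)] fun t => t ^ 2)
    (α γ κ : ℝ) (hα : 0 < α) (hγ : 0 < γ) (hκ : 0 < κ) :
    ∃ lam > 0, ∀ r : ℝ → Fin l → ℝ, ContinuousOn r (Set.Icc a b) →
      intNorm a b r ≥ α * supNorm a b r →
      (∀ t, a ≤ t → t < a + γ → t ≤ b →
        euclNorm ((A t).mulVec (r t)) ≤ κ * (t - a) * supNorm a b r) →
      (∫ t in a..b, euclNorm ((A t).mulVec (r t))) ≥ lam * intNorm a b r := by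
  rcases Nat.eq_zero_or_pos l with hl0 | hl
  · exfalso
    subst hl0
    rw [Matrix.det_isEmpty] at hdeta
    norm_num at hdeta
  set δ := min ((b - a) / 2) (α / 2) with hδdef
  have hδ0 : 0 < δ := lt_min (by linarith) (by linarith)
  have hδhalf : δ ≤ (b - a) / 2 := min_le_left _ _
  have hδα : δ ≤ α / 2 := min_le_right _ _
  have hδb : a + δ ≤ b := by linarith
  have hsub : Set.Icc (a + δ) b ⊆ Set.Icc a b := Set.Icc_subset_Icc (by linarith) le_rfl
  have hAc : ∀ i j, ContinuousOn (fun t => A t i j) (Set.Icc (a + δ) b) :=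
    fun i j => ((hA i j).continuousOn).mono hsub
  have hinj : ∀ t ∈ Set.Icc (a + δ) b, ∀ v : Fin l → ℝ, (A t).mulVec v = 0 → v = 0 := by
    intro t ht v hv
    have hdt : (B t).det ≠ 0 := by
      rcases eq_or_lt_of_le ht.2 with h | h
      · rw [h]; exact hdetb
      · exact hdet t ⟨by linarith [ht.1], h⟩
    apply Matrix.eq_zero_of_mulVec_eq_zero hdt
    rw [hB t, ← Matrix.mulVec_mulVec, hv, Matrix.mulVec_zero]
  obtain ⟨m, hm, hkey⟩ := key_min hl (a + δ) b hδb A hAc hinj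
  refine ⟨m / 2, by positivity, ?_⟩
  intro r hr hint _
  have hgc : ContinuousOn (fun t => euclNorm (r t)) (Set.Icc a b) :=
    continuous_euclNorm.comp_continuousOn hr
  have hfc : ContinuousOn (fun t => euclNorm ((A t).mulVec (r t))) (Set.Icc a b) := by
    apply continuous_euclNorm.comp_continuousOn
    apply continuousOn_pi.2
    intro i
    simp only [Matrix.mulVec, dotProduct]
    exact continuousOn_finset_sum _ fun j _ =>
      ((hA i j).continuousOn).mul ((continuous_apply j).comp_continuousOn hr)
  have huIcc1 : Set.uIcc a (a + δ) ⊆ Set.Icc a b := by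
    rw [Set.uIcc_of_le (by linarith)]; exact Set.Icc_subset_Icc le_rfl (by linarith)
  have huIcc2 : Set.uIcc (a + δ) b ⊆ Set.Icc a b := by
    rw [Set.uIcc_of_le hδb]; exact hsub
  have hg1 : IntervalIntegrable (fun t => euclNorm (r t)) volume a (a + δ) :=
    (hgc.mono huIcc1).intervalIntegrable
  have hg2 : IntervalIntegrable (fun t => euclNorm (r t)) volume (a + δ) b :=
    (hgc.mono huIcc2).intervalIntegrable
  have hf1 : IntervalIntegrable (fun t => euclNorm ((A t).mulVec (r t))) volume a (a + δ) :=
    (hfc.mono huIcc1).intervalIntegrable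
  have hf2 : IntervalIntegrable (fun t => euclNorm ((A t).mulVec (r t))) volume (a + δ) b :=
    (hfc.mono huIcc2).intervalIntegrable
  have hbdd : BddAbove ((fun t => euclNorm (r t)) '' Set.Icc a b) :=
    (isCompact_Icc.image_of_continuousOn hgc).bddAbove
  have hsup : ∀ t ∈ Set.Icc a b, euclNorm (r t) ≤ supNorm a b r :=
    fun t ht => le_csSup hbdd ⟨t, ht, rfl⟩
  have hsup0 : 0 ≤ supNorm a b r :=
    le_trans (euclNorm_nonneg _) (hsup a ⟨le_rfl, hab.le⟩)
  have hI1 : (∫ t in a..(a + δ), euclNorm (r t)) ≤ δ * supNorm a b r := by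
    have h := intervalIntegral.integral_mono_on (by linarith : a ≤ a + δ) hg1
      intervalIntegrable_const (fun t ht => hsup t (huIcc1 (by rwa [Set.uIcc_of_le (by linarith)])))
    simpa using h
  have hI2 : m * (∫ t in (a + δ)..b, euclNorm (r t))
      ≤ ∫ t in (a + δ)..b, euclNorm ((A t).mulVec (r t)) := by
    rw [← intervalIntegral.integral_const_mul]
    exact intervalIntegral.integral_mono_on hδb (hg2.const_mul m) hf2
      (fun t ht => hkey t ht (r t))
  have hsplit_f : (∫ t in a..b, euclNorm ((A t).mulVec (r t)))
      = (∫ t in a..(a + δ), euclNorm ((A t).mulVec (r t)))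
        + ∫ t in (a + δ)..b, euclNorm ((A t).mulVec (r t)) :=
    (intervalIntegral.integral_add_adjacent_intervals hf1 hf2).symm
  have hsplit_g : intNorm a b r
      = (∫ t in a..(a + δ), euclNorm (r t)) + ∫ t in (a + δ)..b, euclNorm (r t) := by
    rw [intNorm]
    exact (intervalIntegral.integral_add_adjacent_intervals hg1 hg2).symm
  have hfn1 : 0 ≤ ∫ t in a..(a + δ), euclNorm ((A t).mulVec (r t)) :=
    intervalIntegral.integral_nonneg (by linarith) (fun t _ => euclNorm_nonneg _)
  have hgn2 : 0 ≤ ∫ t in (a + δ)..b, euclNorm (r t) :=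
    intervalIntegral.integral_nonneg hδb (fun t _ => euclNorm_nonneg _)
  nlinarith [mul_le_mul_of_nonneg_left hI1 hm.le,
    mul_le_mul_of_nonneg_right hδα hsup0,
    mul_le_mul_of_nonneg_left hint hm.le, hm.le]
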